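/- Let α ∈ POPI_n(Y) with rank(α) = m ≥ 1. If α is not regular then its ℋ-class in POPI_n(Y) is a singleton. If α is regular then its ℋ-class has exactly m elements, all elements of this ℋ-class have the same domain and image as α, and if moreover α is idempotent, its ℋ-class is a cyclic group of order m. -/

import Mathlib

open scoped Classical

namespace POPIpaper

/-- Partial transformations of `Ω_n = {1,…,n}`, modelled on `Fin n`. -/
abbrev PT (n : ℕ) := Fin n → Option (Fin n)

/-- Composition of partial transformations (apply `α` first, then `β`). -/
def comp {n : ℕ} (α β : PT n) : PT n := fun x => (α x).bind β

/-- Domain of a partial transformation. -/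
noncomputable def dom {n : ℕ} (α : PT n) : Finset (Fin n) :=
  Finset.univ.filter (fun x => (α x).isSome)

/-- Image of a partial transformation. -/
noncomputable def im {n : ℕ} (α : PT n) : Finset (Fin n) :=
  Finset.univ.filter (fun y => ∃ x, α x = some y)

/-- rank(α) = |Im(α)|. -/
noncomputable def rank {n : ℕ} (α : PT n) : ℕ := (im α).card

/-- Injectivity of a partial transformation. -/
def Inj {n : ℕ} (α : PT n) : Prop :=
  ∀ x y z : Fin n, α x = some z → α y = some z → x = y

/-- Orientation-preserving: the sequence of images, taken along the increasing
enumeration of the domain, is cyclic, i.e. some rotation of it is sorted. -/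
def OP {n : ℕ} (α : PT n) : Prop :=
  ∃ k : ℕ, (((List.finRange n).filterMap α).rotate k).Pairwise (· ≤ ·)

/-- The semigroup `POPI_n(Y)` as a set of partial transformations:
injective, orientation-preserving, with image contained in `Y`. -/
def POPI (n : ℕ) (Y : Finset (Fin n)) : Set (PT n) :=
  {α | Inj α ∧ OP α ∧ ∀ x y : Fin n, α x = some y → y ∈ Y}

/-- Regularity of `α` as an element of the subsemigroup `S`. -/
def IsRegularIn {n : ℕ} (S : Set (PT n)) (α : PT n) : Prop :=
  ∃ β ∈ S, comp (comp α β) α = α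

/-- The partial identity on a subset `A`. -/
def idp {n : ℕ} (A : Finset (Fin n)) : PT n :=
  fun x => if x ∈ A then some x else none

/-- Fixed points of a partial transformation. -/
noncomputable def fix {n : ℕ} (α : PT n) : Finset (Fin n) :=
  Finset.univ.filter (fun x => α x = some x)

/-- Green's relation ℒ on the set `S`: `S¹α = S¹β`. -/
def LRel {n : ℕ} (S : Set (PT n)) (α β : PT n) : Prop :=
  (α = β ∨ ∃ γ ∈ S, comp γ β = α) ∧ (β = α ∨ ∃ γ ∈ S, comp γ α = β)

/-- Green's relation ℛ on the set `S`: `αS¹ = βS¹`. -/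
def RRel {n : ℕ} (S : Set (PT n)) (α β : PT n) : Prop :=
  (α = β ∨ ∃ γ ∈ S, comp β γ = α) ∧ (β = α ∨ ∃ γ ∈ S, comp α γ = β)

/-- Green's relation ℋ = ℒ ∩ ℛ. -/
def HRel {n : ℕ} (S : Set (PT n)) (α β : PT n) : Prop :=
  LRel S α β ∧ RRel S α β

/-- Green's relation 𝒟 = ℒ ∘ ℛ. -/
def DRel {n : ℕ} (S : Set (PT n)) (α β : PT n) : Prop :=
  ∃ γ ∈ S, LRel S α γ ∧ RRel S γ β

/-- `Φ` is a semigroup isomorphism from the subsemigroup `S` onto `T`. -/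
def IsIso {n : ℕ} (S T : Set (PT n)) (Φ : PT n → PT n) : Prop :=
  Set.BijOn Φ S T ∧ ∀ a ∈ S, ∀ b ∈ S, Φ (comp a b) = comp (Φ a) (Φ b)

/-- The product `β * l₁ * ⋯ * l_k` of a nonempty list of partial transformations. -/
def prodList {n : ℕ} (β : PT n) (l : List (PT n)) : PT n := l.foldl comp β

variable {n : ℕ}

noncomputable def rho (A B : Finset (Fin n)) (j : ℕ) : PT n :=
  fun x => if x ∈ A then (B.sort (· ≤ ·))[((A.sort (· ≤ ·)).idxOf x + j) % B.card]? else none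

lemma rho_apply_mem {A B : Finset (Fin n)} {m : ℕ} (hB : B.card = m) {x : Fin n}
    (hx : x ∈ A) (j : ℕ) (hm : 0 < m) :
    rho A B j x = some ((B.sort (· ≤ ·))[((A.sort (· ≤ ·)).idxOf x + j) % m]'(by
      rw [Finset.length_sort, hB]; exact Nat.mod_lt _ hm)) := by
  simp only [rho, if_pos hx, hB]
  rw [List.getElem?_eq_getElem]

lemma rho_apply_not_mem {A B : Finset (Fin n)} {x : Fin n} (hx : x ∉ A) (j : ℕ) :
    rho A B j x = none := by simp [rho, hx]

lemma indexOf_sort_lt {A : Finset (Fin n)} {m : ℕ} (hA : A.card = m) {x : Fin n} (hx : x ∈ A) :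
    (A.sort (· ≤ ·)).idxOf x < m := by
  rw [← hA, ← Finset.length_sort (α := Fin n) (· ≤ ·)]
  exact List.idxOf_lt_length_iff.2 ((Finset.mem_sort _).2 hx)

lemma rho_mod {A B : Finset (Fin n)} {m : ℕ} (hB : B.card = m) (j : ℕ) :
    rho A B j = rho A B (j % m) := by
  funext x
  by_cases hx : x ∈ A
  · simp only [rho, if_pos hx, hB]
    congr 1
    exact (Nat.add_mod_mod _ _ _).symm
  · simp [rho, hx]

lemma comp_rho {A B C : Finset (Fin n)} {m : ℕ} (hA : A.card = m) (hB : B.card = m)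
    (hC : C.card = m) (i j : ℕ) :
    comp (rho A B i) (rho B C j) = rho A C (i + j) := by
  funext x
  by_cases hx : x ∈ A
  · have hm : 0 < m := hA ▸ Finset.card_pos.2 ⟨x, hx⟩
    rw [comp, rho_apply_mem hB hx i hm, Option.bind_some]
    set k := ((A.sort (· ≤ ·)).idxOf x + i) % m with hk
    have hklt : k < (B.sort (· ≤ ·)).length := by
      rw [Finset.length_sort, hB]; exact Nat.mod_lt _ hm
    have hmem : (B.sort (· ≤ ·))[k] ∈ B := (Finset.mem_sort _).1 (List.getElem_mem _)
    rw [rho_apply_mem hC hmem j hm, rho_apply_mem hC hx (i + j) hm]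
    congr 2
    rw [List.Nodup.idxOf_getElem (B.sort_nodup _)]
    rw [hk, Nat.mod_add_mod, Nat.add_assoc]
  · simp [comp, rho_apply_not_mem hx]

lemma dom_rho {A B : Finset (Fin n)} {m : ℕ} (hB : B.card = m) (hm : 0 < m) (j : ℕ) :
    dom (rho A B j) = A := by
  ext x
  simp only [dom, Finset.mem_filter, Finset.mem_univ, true_and]
  by_cases hx : x ∈ A
  · simp [rho_apply_mem hB hx j hm, hx]
  · simp [rho_apply_not_mem hx, hx]

lemma rho_zero (A : Finset (Fin n)) : rho A A 0 = idp A := by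
  funext x
  by_cases hx : x ∈ A
  · have hm : 0 < A.card := Finset.card_pos.2 ⟨x, hx⟩
    have h1 : (A.sort (· ≤ ·)).idxOf x < A.card := indexOf_sort_lt rfl hx
    rw [rho_apply_mem rfl hx 0 hm, idp, if_pos hx]
    congr 1
    simp only [Nat.add_zero, Nat.mod_eq_of_lt h1]
    exact List.getElem_idxOf (by rw [Finset.length_sort]; exact h1)
  · rw [rho_apply_not_mem hx, idp, if_neg hx]

noncomputable def vlist (β : PT n) : List (Fin n) := (List.finRange n).filterMap β

lemma filterMap_eq_map_filter {γ δ : Type*} (f : γ → Option δ) (d : δ) :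
    ∀ l : List γ, l.filterMap f = (l.filter (fun x => (f x).isSome)).map (fun x => (f x).getD d)
  | [] => rfl
  | (a :: l) => by
    cases h : f a <;>
      simp [List.filterMap_cons, h, List.filter_cons, filterMap_eq_map_filter f d l]

lemma filter_finRange_eq_sort (β : PT n) :
    (List.finRange n).filter (fun x => (β x).isSome) = (dom β).sort (· ≤ ·) := by
  refine List.Perm.eq_of_pairwise' ((List.pairwise_le_finRange n).filter _)
    (Finset.pairwise_sort _ _) ?_
  apply List.perm_of_nodup_nodup_toFinset_eq
  · exact (List.nodup_finRange n).filter _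
  · exact Finset.sort_nodup _ _
  · ext y
    simp [List.mem_filter, dom]

lemma v_eq_map (β : PT n) (d : Fin n) :
    vlist β = ((dom β).sort (· ≤ ·)).map (fun x => (β x).getD d) := by
  rw [vlist, filterMap_eq_map_filter β d, filter_finRange_eq_sort]

lemma toFinset_v (β : PT n) : (vlist β).toFinset = im β := by
  ext y; simp [vlist, List.mem_filterMap, im]

lemma nodup_v {β : PT n} (hβ : Inj β) : (vlist β).Nodup := by
  apply List.Nodup.filterMap _ (List.nodup_finRange n)
  intro a a' b hb hb'
  exact hβ a a' b hb hb'

lemma mem_dom {β : PT n} {x : Fin n} : x ∈ dom β ↔ (β x).isSome := by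
  simp [dom]

lemma mem_im {β : PT n} {y : Fin n} : y ∈ im β ↔ ∃ x, β x = some y := by
  simp [im]

lemma card_dom_eq_card_im {β : PT n} (hβ : Inj β) : (dom β).card = (im β).card := by
  rcases (dom β).eq_empty_or_nonempty with h | h
  · have : im β = ∅ := by
      rw [Finset.eq_empty_iff_forall_notMem]
      intro y hy
      obtain ⟨x, hx⟩ := mem_im.1 hy
      have : x ∈ dom β := mem_dom.2 (by simp [hx])
      simp [h] at this
    rw [h, this]
  · obtain ⟨d, _⟩ := h
    have h1 : (vlist β).length = (dom β).card := by
      rw [v_eq_map β d, List.length_map, Finset.length_sort]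
    rw [← h1, ← toFinset_v β, List.toFinset_card_of_nodup (nodup_v hβ)]

lemma v_rho {A B : Finset (Fin n)} {m : ℕ} (hA : A.card = m) (hB : B.card = m)
    (hm : 0 < m) (j : ℕ) :
    vlist (rho A B j) = (B.sort (· ≤ ·)).rotate j := by
  have hAne : A.Nonempty := Finset.card_pos.1 (hA ▸ hm)
  obtain ⟨d, hd⟩ := hAne
  rw [v_eq_map _ d, dom_rho hB hm]
  apply List.ext_getElem
  · simp [hA, hB]
  · intro i h1 h2
    simp only [List.getElem_map]
    have hiA : i < (A.sort (· ≤ ·)).length := by simpa using h1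
    have hmemA : (A.sort (· ≤ ·))[i] ∈ A := (Finset.mem_sort _).1 (List.getElem_mem _)
    rw [rho_apply_mem hB hmemA j hm, Option.getD_some,
      List.getElem_rotate, List.Nodup.idxOf_getElem (A.sort_nodup _)]
    congr 1
    rw [Finset.length_sort, hB]

lemma op_of_v_rotate {β : PT n} {B : Finset (Fin n)} {j : ℕ}
    (h : vlist β = (B.sort (· ≤ ·)).rotate j) : OP β := by
  rcases Nat.eq_zero_or_pos B.card with hm | hm
  · refine ⟨0, ?_⟩
    have : B = ∅ := Finset.card_eq_zero.1 hm
    simp only [vlist] at h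
    rw [h]
    simp [this]
  · refine ⟨B.card - j % B.card, ?_⟩
    simp only [vlist] at h
    have hlen : (B.sort (· ≤ ·)).length = B.card := Finset.length_sort _
    rw [show (List.finRange n).filterMap β = List.filterMap β (List.finRange n) from rfl, h,
      List.rotate_rotate]
    have harith : j + (B.card - j % B.card) = B.card * (j / B.card + 1) := by
      have h1 : j % B.card + B.card * (j / B.card) = j := Nat.mod_add_div j B.card
      have h2 : j % B.card < B.card := Nat.mod_lt _ hm
      ring_nf
      omega
    rw [harith, ← hlen, List.rotate_length_mul]
    exact Finset.pairwise_sort _ _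

lemma op_rho {A B : Finset (Fin n)} {m : ℕ} (hA : A.card = m) (hB : B.card = m)
    (hm : 0 < m) (j : ℕ) : OP (rho A B j) :=
  op_of_v_rotate (B := B) (j := j) (v_rho hA hB hm j)

lemma add_mod_inj_of_lt {a b j m : ℕ} (ha : a < m) (hb : b < m)
    (h : (a + j) % m = (b + j) % m) : a = b := by
  have h2 : a ≡ b [MOD m] := Nat.ModEq.add_right_cancel' j h
  have := h2.eq_of_lt_of_lt ha hb
  exact this

lemma inj_rho {A B : Finset (Fin n)} {m : ℕ} (hA : A.card = m) (hB : B.card = m) (j : ℕ) :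
    Inj (rho A B j) := by
  intro x y z hx hy
  by_cases hxA : x ∈ A
  · by_cases hyA : y ∈ A
    · have hm : 0 < m := hA ▸ Finset.card_pos.2 ⟨x, hxA⟩
      rw [rho_apply_mem hB hxA j hm] at hx
      rw [rho_apply_mem hB hyA j hm] at hy
      have := hx.trans hy.symm
      have heq := Option.some_injective _ this
      have hnd := B.sort_nodup (· ≤ ·)
      have hmod : ((A.sort (· ≤ ·)).idxOf x + j) % m = ((A.sort (· ≤ ·)).idxOf y + j) % m := by
        have := (List.Nodup.getElem_inj_iff hnd).1 heq
        exact this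
      have hix : (A.sort (· ≤ ·)).idxOf x < m := indexOf_sort_lt hA hxA
      have hiy : (A.sort (· ≤ ·)).idxOf y < m := indexOf_sort_lt hA hyA
      have : (A.sort (· ≤ ·)).idxOf x = (A.sort (· ≤ ·)).idxOf y :=
        add_mod_inj_of_lt hix hiy hmod
      have hx' : x ∈ A.sort (· ≤ ·) := (Finset.mem_sort _).2 hxA
      have hy' : y ∈ A.sort (· ≤ ·) := (Finset.mem_sort _).2 hyA
      calc x = (A.sort (· ≤ ·))[(A.sort (· ≤ ·)).idxOf x]'(List.idxOf_lt_length_iff.2 hx') :=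
              (List.getElem_idxOf _).symm
        _ = (A.sort (· ≤ ·))[(A.sort (· ≤ ·)).idxOf y]'(List.idxOf_lt_length_iff.2 hy') := by
              congr 1
        _ = y := List.getElem_idxOf _
    · rw [rho_apply_not_mem hyA] at hy; exact absurd hy (by simp)
  · rw [rho_apply_not_mem hxA] at hx; exact absurd hx (by simp)

lemma im_rho {A B : Finset (Fin n)} {m : ℕ} (hA : A.card = m) (hB : B.card = m)
    (hm : 0 < m) (j : ℕ) : im (rho A B j) = B := by
  rw [← toFinset_v, v_rho hA hB hm j]
  ext y
  rw [List.mem_toFinset, List.mem_rotate, Finset.mem_sort]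

lemma rho_mem_POPI {Y : Finset (Fin n)} {A B : Finset (Fin n)} {m : ℕ}
    (hA : A.card = m) (hB : B.card = m) (hm : 0 < m) (hBY : B ⊆ Y) (j : ℕ) :
    rho A B j ∈ POPI n Y := by
  refine ⟨inj_rho hA hB j, op_rho hA hB hm j, ?_⟩
  intro x y hxy
  apply hBY
  have : y ∈ im (rho A B j) := mem_im.2 ⟨x, hxy⟩
  rwa [im_rho hA hB hm j] at this

lemma rho_j_inj {A B : Finset (Fin n)} {m : ℕ} (hA : A.card = m) (hB : B.card = m)
    (hm : 0 < m) {j j' : ℕ} (hj : j < m) (hj' : j' < m)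
    (h : rho A B j = rho A B j') : j = j' := by
  have hAne : A.Nonempty := Finset.card_pos.1 (hA ▸ hm)
  have hlenA : 0 < (A.sort (· ≤ ·)).length := by
    rw [Finset.length_sort]; exact Finset.card_pos.2 hAne
  set x := (A.sort (· ≤ ·))[0]
  have hxA : x ∈ A := (Finset.mem_sort _).1 (List.getElem_mem _)
  have hx0 : (A.sort (· ≤ ·)).idxOf x = 0 := List.Nodup.idxOf_getElem (A.sort_nodup _) 0 hlenA
  have h1 := congrFun h x
  rw [rho_apply_mem hB hxA j hm, rho_apply_mem hB hxA j' hm] at h1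
  have h2 := Option.some_injective _ h1
  have h3 := (List.Nodup.getElem_inj_iff (B.sort_nodup _)).1 h2
  rw [hx0] at h3
  simpa [Nat.mod_eq_of_lt hj, Nat.mod_eq_of_lt hj'] using h3

lemma eq_rho_of_mem {β : PT n} {m : ℕ} (hInj : Inj β) (hOP : OP β) (hm : 0 < m)
    (hA : (dom β).card = m) (hB : (im β).card = m) :
    ∃ j < m, β = rho (dom β) (im β) j := by
  set A := dom β
  set B := im β
  have hAne : A.Nonempty := Finset.card_pos.1 (hA ▸ hm)
  obtain ⟨d, hd⟩ := hAne
  have hlenv : (vlist β).length = m := by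
    rw [v_eq_map β d, List.length_map, Finset.length_sort, hA]
  obtain ⟨k, hk⟩ := hOP
  have hrot : (vlist β).rotate k = B.sort (· ≤ ·) := by
    refine List.Perm.eq_of_pairwise' hk (Finset.pairwise_sort _ _) ?_
    apply List.perm_of_nodup_nodup_toFinset_eq
    · exact List.nodup_rotate.2 (nodup_v hInj)
    · exact Finset.sort_nodup _ _
    · ext y
      rw [List.mem_toFinset, List.mem_rotate, ← List.mem_toFinset, toFinset_v,
        List.mem_toFinset, Finset.mem_sort]
  have hback : vlist β = (B.sort (· ≤ ·)).rotate (m - k % m) := by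
    rw [← hrot, List.rotate_rotate]
    have harith : k + (m - k % m) = m * (k / m + 1) := by
      have h1 : k % m + m * (k / m) = k := Nat.mod_add_div k m
      have h2 : k % m < m := Nat.mod_lt _ hm
      ring_nf
      omega
    rw [harith, ← hlenv, List.rotate_length_mul]
  refine ⟨(m - k % m) % m, Nat.mod_lt _ hm, ?_⟩
  have hlenB : (B.sort (· ≤ ·)).length = m := by rw [Finset.length_sort, hB]
  have hsortB : (B.sort (· ≤ ·)).rotate (m - k % m) = (B.sort (· ≤ ·)).rotate ((m - k % m) % m) := by
    set t := m - k % m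
    rw [← hlenB, List.rotate_mod]
  rw [hsortB] at hback
  set j := (m - k % m) % m
  funext x
  by_cases hx : x ∈ A
  · have hxd : (β x).isSome := mem_dom.1 hx
    obtain ⟨y, hy⟩ := Option.isSome_iff_exists.1 hxd
    rw [rho_apply_mem hB hx j hm, hy]
    congr 1
    set i := (A.sort (· ≤ ·)).idxOf x
    have hi : i < m := indexOf_sort_lt hA hx
    have hiv : i < (vlist β).length := by rw [hlenv]; exact hi
    have hvx : (vlist β)[i] = y := by
      rw [List.getElem_of_eq (v_eq_map β d) hiv, List.getElem_map]
      have : (A.sort (· ≤ ·))[i]'(by rw [Finset.length_sort, hA]; exact hi) = x :=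
        List.getElem_idxOf (List.idxOf_lt_length_iff.2 ((Finset.mem_sort _).2 hx))
      rw [this, hy, Option.getD_some]
    have h5 := List.getElem_of_eq hback hiv
    rw [List.getElem_rotate] at h5
    simp only [hlenB] at h5
    rw [← hvx, h5]
  · rw [rho_apply_not_mem hx]
    have : ¬ (β x).isSome := fun hs => hx (mem_dom.2 hs)
    exact Option.not_isSome_iff_eq_none.1 this

lemma im_comp_subset (γ β : PT n) : im (comp γ β) ⊆ im β := by
  intro y hy
  obtain ⟨x, hx⟩ := mem_im.1 hy
  obtain ⟨c, _, hc2⟩ := Option.bind_eq_some_iff.1 hx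
  exact mem_im.2 ⟨c, hc2⟩

lemma dom_comp_subset (β γ : PT n) : dom (comp β γ) ⊆ dom β := by
  intro x hx
  have := mem_dom.1 hx
  rw [comp] at this
  obtain ⟨y, hy⟩ := Option.isSome_iff_exists.1 this
  obtain ⟨c, hc1, _⟩ := Option.bind_eq_some_iff.1 hy
  exact mem_dom.2 (by simp [hc1])

lemma hrel_dom_im {S : Set (PT n)} {α β : PT n} (h : HRel S α β) :
    dom β = dom α ∧ im β = im α := by
  obtain ⟨⟨hL1, hL2⟩, ⟨hR1, hR2⟩⟩ := h
  constructor
  · rcases hR1 with h1 | ⟨γ, _, hγ⟩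
    · rw [h1]
    · rcases hR2 with h2 | ⟨δ, _, hδ⟩
      · rw [h2]
      · exact le_antisymm (hδ ▸ dom_comp_subset α δ) (hγ ▸ dom_comp_subset β γ)
  · rcases hL1 with h1 | ⟨γ, _, hγ⟩
    · rw [h1]
    · rcases hL2 with h2 | ⟨δ, _, hδ⟩
      · rw [h2]
      · exact le_antisymm (hδ ▸ im_comp_subset δ α) (hγ ▸ im_comp_subset γ β)

lemma comp_idp_left {β : PT n} {A : Finset (Fin n)} (h : dom β ⊆ A) : comp (idp A) β = β := by
  funext x
  by_cases hx : x ∈ A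
  · simp [comp, idp, hx]
  · have : x ∉ dom β := fun hd => hx (h hd)
    have hnone : β x = none := Option.not_isSome_iff_eq_none.1 (fun hs => this (mem_dom.2 hs))
    simp [comp, idp, hx, hnone]

lemma comp_idp_right {β : PT n} {A : Finset (Fin n)} (h : im β ⊆ A) : comp β (idp A) = β := by
  funext x
  cases hx : β x with
  | none => simp [comp, hx]
  | some y =>
    have : y ∈ A := h (mem_im.2 ⟨x, hx⟩)
    simp [comp, hx, idp, this]

lemma im_sub_Y {Y : Finset (Fin n)} {α : PT n} (hα : α ∈ POPI n Y) : im α ⊆ Y := by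
  intro y hy
  obtain ⟨x, hx⟩ := mem_im.1 hy
  exact hα.2.2 x y hx

lemma hrel_refl (S : Set (PT n)) (α : PT n) : HRel S α α :=
  ⟨⟨Or.inl rfl, Or.inl rfl⟩, ⟨Or.inl rfl, Or.inl rfl⟩⟩

lemma dom_sub_Y_of_reg {Y : Finset (Fin n)} {α : PT n} (hα : α ∈ POPI n Y)
    (hreg : IsRegularIn (POPI n Y) α) : dom α ⊆ Y := by
  obtain ⟨β, hβ, hc⟩ := hreg
  intro a ha
  obtain ⟨y, hy⟩ := Option.isSome_iff_exists.1 (mem_dom.1 ha)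
  have h1 := congrFun hc a
  rw [comp, comp, hy, Option.bind_some] at h1
  obtain ⟨c, hc1, hc2⟩ := Option.bind_eq_some_iff.1 h1
  have hca : c = a := hα.1 c a y hc2 hy
  subst hca
  exact hβ.2.2 y c hc1

lemma reg_of_dom_sub_Y {Y : Finset (Fin n)} {α : PT n} {m j₀ : ℕ}
    (hAm : (dom α).card = m) (hBm : (im α).card = m) (hm : 0 < m) (hj₀ : j₀ ≤ m)
    (hαρ : α = rho (dom α) (im α) j₀) (hAY : dom α ⊆ Y) :
    IsRegularIn (POPI n Y) α := by
  refine ⟨rho (im α) (dom α) (m - j₀), rho_mem_POPI hBm hAm hm hAY _, ?_⟩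
  have h2 : comp α (rho (im α) (dom α) (m - j₀)) = idp (dom α) := by
    nth_rewrite 1 [hαρ]
    rw [comp_rho hAm hBm hAm]
    have : j₀ + (m - j₀) = m := by omega
    rw [this, rho_mod hAm m, Nat.mod_self, rho_zero]
  rw [h2]
  exact comp_idp_left (le_refl _)

lemma dom_sub_Y_of_lmul {Y : Finset (Fin n)} {α β γ : PT n} (hγ : γ ∈ POPI n Y)
    (hc : comp γ β = α) (hdom : dom β = dom α) (hInj : Inj α) : dom α ⊆ Y := by
  classical
  set A := dom α
  have hsome : ∀ a ∈ A, (γ a).isSome := by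
    intro a ha
    obtain ⟨y, hy⟩ := Option.isSome_iff_exists.1 (mem_dom.1 ha)
    have h1 := (congrFun hc a).trans hy
    obtain ⟨c, hc1, _⟩ := Option.bind_eq_some_iff.1 h1
    simp [hc1]
  have key : ∀ a (ha : a ∈ A), γ a = some ((γ a).get (hsome a ha)) := fun a ha =>
    (Option.some_get (hsome a ha)).symm
  have hval : ∀ a (ha : a ∈ A), β ((γ a).get (hsome a ha)) = α a := by
    intro a ha
    have h1 := congrFun hc a
    rw [comp, key a ha, Option.bind_some] at h1
    exact h1
  have hmapsto : ∀ a (ha : a ∈ A), (γ a).get (hsome a ha) ∈ A := by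
    intro a ha
    obtain ⟨y, hy⟩ := Option.isSome_iff_exists.1 (mem_dom.1 ha)
    rw [← hdom]
    exact mem_dom.2 (by rw [hval a ha, hy]; rfl)
  have hinj : ∀ a₁ a₂ (ha₁ : a₁ ∈ A) (ha₂ : a₂ ∈ A),
      (γ a₁).get (hsome a₁ ha₁) = (γ a₂).get (hsome a₂ ha₂) → a₁ = a₂ := by
    intro a₁ a₂ ha₁ ha₂ he
    obtain ⟨y, hy⟩ := Option.isSome_iff_exists.1 (mem_dom.1 ha₁)
    have e1 : α a₁ = α a₂ := by rw [← hval a₁ ha₁, ← hval a₂ ha₂, he]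
    exact hInj a₁ a₂ y hy (by rw [← e1, hy])
  intro b hb
  obtain ⟨a, ha, hab⟩ := Finset.surj_on_of_inj_on_of_card_le
    (fun a ha => (γ a).get (hsome a ha)) hmapsto hinj (le_refl A.card) b hb
  rw [hab]
  exact hγ.2.2 a _ (key a ha)

lemma rho_congr_mod {A B : Finset (Fin n)} {m : ℕ} (hB : B.card = m) {i i' : ℕ}
    (h : i % m = i' % m) : rho A B i = rho A B i' := by
  rw [rho_mod hB i, rho_mod hB i', h]

lemma hrel_rho {Y A B : Finset (Fin n)} {m j₀ j : ℕ} (hAm : A.card = m) (hBm : B.card = m)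
    (hm : 0 < m) (hAY : A ⊆ Y) (hBY : B ⊆ Y) (hj₀ : j₀ ≤ m) (hj : j ≤ m) :
    HRel (POPI n Y) (rho A B j₀) (rho A B j) := by
  refine ⟨⟨Or.inr ⟨rho A A (m + j₀ - j), rho_mem_POPI hAm hAm hm hAY _, ?_⟩,
          Or.inr ⟨rho A A (m + j - j₀), rho_mem_POPI hAm hAm hm hAY _, ?_⟩⟩,
         ⟨Or.inr ⟨rho B B (m + j₀ - j), rho_mem_POPI hBm hBm hm hBY _, ?_⟩,
          Or.inr ⟨rho B B (m + j - j₀), rho_mem_POPI hBm hBm hm hBY _, ?_⟩⟩⟩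
  · rw [comp_rho hAm hAm hBm]
    apply rho_congr_mod hBm
    have e : (m + j₀ - j) + j = m + j₀ := by omega
    rw [e, Nat.add_mod_left]
  · rw [comp_rho hAm hAm hBm]
    apply rho_congr_mod hBm
    have e : (m + j - j₀) + j₀ = m + j := by omega
    rw [e, Nat.add_mod_left]
  · rw [comp_rho hAm hBm hBm]
    apply rho_congr_mod hBm
    have e : j + (m + j₀ - j) = m + j₀ := by omega
    rw [e, Nat.add_mod_left]
  · rw [comp_rho hAm hBm hBm]
    apply rho_congr_mod hBm
    have e : j₀ + (m + j - j₀) = m + j := by omega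
    rw [e, Nat.add_mod_left]

lemma prodList_rho {B : Finset (Fin n)} {m : ℕ} (hB : B.card = m) :
    ∀ (k i : ℕ), prodList (rho B B i) (List.replicate k (rho B B 1)) = rho B B (i + k)
  | 0, i => by simp [prodList]
  | (k+1), i => by
    rw [List.replicate_succ, prodList, List.foldl_cons, comp_rho hB hB hB,
      show List.foldl comp (rho B B (i+1)) (List.replicate k (rho B B 1))
        = prodList (rho B B (i+1)) (List.replicate k (rho B B 1)) from rfl,
      prodList_rho hB k (i+1), show i + 1 + k = i + (k+1) by omega]

/-- ℋ-classes in `POPI_n(Y)`. -/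
theorem green_H_class {n : ℕ} (Y : Finset (Fin n)) (hY : Y.Nonempty)
    (α : PT n) (hα : α ∈ POPI n Y) (m : ℕ) (hm : 1 ≤ m) (hrk : rank α = m) :
    (¬ IsRegularIn (POPI n Y) α →
      {β | β ∈ POPI n Y ∧ HRel (POPI n Y) α β} = {α}) ∧
    (IsRegularIn (POPI n Y) α →
      Set.ncard {β | β ∈ POPI n Y ∧ HRel (POPI n Y) α β} = m ∧
      (∀ β ∈ POPI n Y, HRel (POPI n Y) α β → dom β = dom α ∧ im β = im α) ∧
      (comp α α = α →
        -- the ℋ-class of the idempotent `α` is a cyclic group of order `m`: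
        -- it consists of the powers `γ, γ², …, γ^m` of a single element, `γ^m = α`
        -- is its identity, and it is closed under composition
        ∃ γ : PT n,
          {β | β ∈ POPI n Y ∧ HRel (POPI n Y) α β} =
            {β | ∃ k < m, prodList γ (List.replicate k γ) = β} ∧
          prodList γ (List.replicate (m - 1) γ) = α ∧
          ∀ β₁ ∈ {β | β ∈ POPI n Y ∧ HRel (POPI n Y) α β},
            ∀ β₂ ∈ {β | β ∈ POPI n Y ∧ HRel (POPI n Y) α β},
              comp α β₁ = β₁ ∧ comp β₁ α = β₁ ∧
              comp β₁ β₂ ∈ {β | β ∈ POPI n Y ∧ HRel (POPI n Y) α β})) := by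
  have hm0 : 0 < m := hm
  have hBm : (im α).card = m := hrk
  have hAm : (dom α).card = m := (card_dom_eq_card_im hα.1).trans hrk
  have hBY : im α ⊆ Y := im_sub_Y hα
  obtain ⟨j₀, hj₀, hαρ⟩ := eq_rho_of_mem hα.1 hα.2.1 hm0 hAm hBm
  constructor
  · -- non-regular case
    intro hnr
    refine Set.eq_singleton_iff_unique_mem.2 ⟨⟨hα, hrel_refl _ _⟩, ?_⟩
    rintro β ⟨hβS, hH⟩
    rcases hH.1.1 with h | ⟨γ, hγS, hc⟩
    · exact h.symm
    · exfalso
      apply hnr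
      have hAY : dom α ⊆ Y := dom_sub_Y_of_lmul hγS hc (hrel_dom_im hH).1 hα.1
      exact reg_of_dom_sub_Y hAm hBm hm0 hj₀.le hαρ hAY
  · -- regular case
    intro hreg
    have hAY : dom α ⊆ Y := dom_sub_Y_of_reg hα hreg
    have HCeq : {β | β ∈ POPI n Y ∧ HRel (POPI n Y) α β}
        = ↑((Finset.range m).image (rho (dom α) (im α))) := by
      ext β
      simp only [Set.mem_setOf_eq, Finset.coe_image, Set.mem_image, Finset.mem_coe,
        Finset.mem_range]
      constructor
      · rintro ⟨hβS, hH⟩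
        obtain ⟨hd, hi⟩ := hrel_dom_im hH
        have hAm' : (dom β).card = m := by rw [hd]; exact hAm
        have hBm' : (im β).card = m := by rw [hi]; exact hBm
        obtain ⟨j, hj, hβρ⟩ := eq_rho_of_mem hβS.1 hβS.2.1 hm0 hAm' hBm'
        rw [hd, hi] at hβρ
        exact ⟨j, hj, hβρ.symm⟩
      · rintro ⟨j, hj, rfl⟩
        refine ⟨rho_mem_POPI hAm hBm hm0 hBY j, ?_⟩
        nth_rewrite 1 [hαρ]
        exact hrel_rho hAm hBm hm0 hAY hBY hj₀.le hj.le
    refine ⟨?_, ?_, ?_⟩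
    · rw [HCeq, Set.ncard_coe_finset, Finset.card_image_of_injOn, Finset.card_range]
      intro j hj j' hj' h
      exact rho_j_inj hAm hBm hm0 (Finset.mem_range.1 hj) (Finset.mem_range.1 hj') h
    · intro β _ hH
      exact hrel_dom_im hH
    · intro hid
      have hfix : ∀ y ∈ im α, α y = some y := by
        intro y hy
        obtain ⟨x, hx⟩ := mem_im.1 hy
        have h1 := congrFun hid x
        rw [comp, hx, Option.bind_some] at h1
        exact h1
      have hBA : im α = dom α := by
        apply Finset.eq_of_subset_of_card_le
        · intro y hy
          exact mem_dom.2 (by rw [hfix y hy]; rfl)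
        · rw [hAm, hBm]
      rw [hBA] at HCeq hBm hBY
      set D := dom α with hD
      have hα0 : α = rho D D 0 := by
        rw [rho_zero]
        funext x
        by_cases hx : x ∈ D
        · rw [idp, if_pos hx]
          exact hfix x (by rw [hBA]; exact hx)
        · rw [idp, if_neg hx]
          exact Option.not_isSome_iff_eq_none.1 (fun hs => hx (mem_dom.2 hs))
      refine ⟨rho D D 1, ?_, ?_, ?_⟩
      · rw [HCeq]
        ext β
        simp only [Finset.coe_image, Set.mem_image, Finset.mem_coe, Finset.mem_range,
          Set.mem_setOf_eq]
        constructor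
        · rintro ⟨j, hj, rfl⟩
          by_cases hj0 : j = 0
          · refine ⟨m - 1, by omega, ?_⟩
            rw [prodList_rho hBm, show 1 + (m-1) = m by omega, rho_mod hBm m, Nat.mod_self, hj0]
          · refine ⟨j - 1, by omega, ?_⟩
            rw [prodList_rho hBm, show 1 + (j-1) = j by omega]
        · rintro ⟨k, hk, rfl⟩
          refine ⟨(1 + k) % m, Nat.mod_lt _ hm0, ?_⟩
          rw [prodList_rho hBm]
          exact (rho_mod hBm _).symm
      · rw [prodList_rho hBm, show 1 + (m-1) = m by omega, rho_mod hBm m, Nat.mod_self, hα0]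
      · intro β₁ hβ₁ β₂ hβ₂
        rw [HCeq] at hβ₁ hβ₂
        simp only [Finset.coe_image, Set.mem_image, Finset.mem_coe, Finset.mem_range] at hβ₁ hβ₂
        obtain ⟨j₁, hj₁, rfl⟩ := hβ₁
        obtain ⟨j₂, hj₂, rfl⟩ := hβ₂
        refine ⟨?_, ?_, ?_⟩
        · rw [hα0, comp_rho hBm hBm hBm, Nat.zero_add]
        · rw [hα0, comp_rho hBm hBm hBm, Nat.add_zero]
        · rw [HCeq, comp_rho hBm hBm hBm]
          simp only [Finset.coe_image, Set.mem_image, Finset.mem_coe, Finset.mem_range]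
          exact ⟨(j₁ + j₂) % m, Nat.mod_lt _ hm0, (rho_mod hBm _).symm⟩

end POPIpaper
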